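/- Consider 2n agents with identical claims 1/(2n): n agents of group 1 with linear utility given by ν₁(F) = λ(F ∩ [0,1/2)) + (3/2)λ(F ∩ [1/2,3/4)) + (1/2)λ(F ∩ [3/4,1]) and n agents of group 2 with ν₂(F) = 2λ(F ∩ [1/2,1]). Let π = {A,B} with A = [0,1/2), B = [1/2,1]. Then: (a) unit prices on A and B together with the allocation giving each group-1 agent the bundle (1/(2n),0) and each group-2 agent the bundle (0,1/(2n)) form a competitive equilibrium of E(π), and the sum of all agents' equilibrium utilities equals 3/2; (b) for every classification ρ that refines π (every interval of ρ is contained in A or in B) and partitions B into at least two intervals of positive measure, every competitive equilibrium ⟨q,(y^i)⟩ of E(ρ) satisfies Σ_i V_i(ρ,y^i) < 3/2. -/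

import Mathlib

open MeasureTheory Set
open scoped ENNReal Classical

noncomputable section

/-- Lebesgue measure of a set, as a real number. -/
def lvol (C : Set ℝ) : ℝ := (volume C).toReal

/-- Linear utility over tradable bundles: `V(π,x) = ∑_{C∈π} (x_C/λ(C)) ν(C)`,
where the evaluation of each commodity is given by the set function `νf`. -/
def Vlin (parts : Finset (Set ℝ)) (νf : Set ℝ → ℝ) (x : Set ℝ → ℝ) : ℝ :=
  ∑ C ∈ parts, (x C / lvol C) * νf C

/-- Competitive equilibrium of the economy on the commodities `parts` with claims `κ`
and utilities `Vf` on tradable bundles. -/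
def IsEqm {n : ℕ} (parts : Finset (Set ℝ)) (κ : Fin n → ℝ)
    (Vf : Fin n → (Set ℝ → ℝ) → ℝ) (p : Set ℝ → ℝ) (x : Fin n → Set ℝ → ℝ) : Prop :=
  (∀ C ∈ parts, 0 ≤ p C) ∧
  (∀ i, ∀ C ∈ parts, 0 ≤ x i C) ∧
  (∀ C ∈ parts, ∑ i, x i C ≤ lvol C) ∧
  (∀ i, ∑ C ∈ parts, p C * x i C ≤ κ i * ∑ C ∈ parts, p C * lvol C) ∧
  (∀ i, ∀ y : Set ℝ → ℝ, (∀ C ∈ parts, 0 ≤ y C) → Vf i (x i) < Vf i y →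
    κ i * ∑ C ∈ parts, p C * lvol C < ∑ C ∈ parts, p C * y C)

/-- A classification: a finite partition of `[0,1]` into intervals of positive
Lebesgue measure. -/
structure Classification where
  parts : Finset (Set ℝ)
  isInterval : ∀ C ∈ parts, C.OrdConnected
  posMeas : ∀ C ∈ parts, 0 < volume C
  pairwiseDisj : (parts : Set (Set ℝ)).PairwiseDisjoint id
  cover : ⋃₀ (parts : Set (Set ℝ)) = Set.Icc (0 : ℝ) 1

namespace Stmt13

/-- Group 1's evaluation measure:
`ν₁(F) = λ(F ∩ [0,1/2)) + (3/2) λ(F ∩ [1/2,3/4)) + (1/2) λ(F ∩ [3/4,1])`. -/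
def ν₁ (F : Set ℝ) : ℝ :=
  lvol (F ∩ Set.Ico 0 (1/2)) + (3/2) * lvol (F ∩ Set.Ico (1/2) (3/4)) +
    (1/2) * lvol (F ∩ Set.Icc (3/4) 1)

/-- Group 2's evaluation measure: `ν₂(F) = 2 λ(F ∩ [1/2,1])`. -/
def ν₂ (F : Set ℝ) : ℝ := 2 * lvol (F ∩ Set.Icc (1/2) 1)

/-- The `2n` agents: the first `n` belong to group 1, the rest to group 2. -/
def νs (n : ℕ) : Fin (2 * n) → Set ℝ → ℝ := fun i => if (i : ℕ) < n then ν₁ else ν₂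

/-- Identical claims `κᵢ = 1/(2n)`. -/
def κ (n : ℕ) : Fin (2 * n) → ℝ := fun _ => 1 / (2 * n)

def A : Set ℝ := Set.Ico 0 (1/2)
def B : Set ℝ := Set.Icc (1/2) 1

/-- The classification `π = {A,B}`. -/
def partsπ : Finset (Set ℝ) := {A, B}

/-- Each group-1 agent gets the bundle `(1/(2n),0)`, each group-2 agent `(0,1/(2n))`. -/
def xs (n : ℕ) : Fin (2 * n) → Set ℝ → ℝ := fun i S =>
  if (i : ℕ) < n then (if S = A then 1 / (2 * n) else 0)
  else (if S = B then 1 / (2 * n) else 0)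

lemma lvol_nonneg (C : Set ℝ) : 0 ≤ lvol C := ENNReal.toReal_nonneg
lemma lvol_empty : lvol (∅ : Set ℝ) = 0 := by simp [lvol]
lemma lvol_Ico {a b : ℝ} (h : a ≤ b) : lvol (Set.Ico a b) = b - a := by
  rw [lvol, Real.volume_Ico, ENNReal.toReal_ofReal (by linarith)]
lemma lvol_Icc {a b : ℝ} (h : a ≤ b) : lvol (Set.Icc a b) = b - a := by
  rw [lvol, Real.volume_Icc, ENNReal.toReal_ofReal (by linarith)]

lemma vol_ne_top {C : Set ℝ} (h : C ⊆ Set.Icc (0:ℝ) 1) : volume C ≠ ⊤ := by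
  have h2 : volume C ≤ volume (Set.Icc (0:ℝ) 1) := measure_mono h
  rw [Real.volume_Icc] at h2
  exact ne_top_of_le_ne_top ENNReal.ofReal_ne_top h2

lemma sum_lvol_inter (P' : Finset (Set ℝ))
    (hdisj : (↑P' : Set (Set ℝ)).PairwiseDisjoint id)
    (hmeas : ∀ C ∈ P', MeasurableSet C)
    (hsub01 : ∀ C ∈ P', C ⊆ Set.Icc (0:ℝ) 1)
    {T : Set ℝ} (hU : (⋃ C ∈ P', C) = T) {S : Set ℝ} (hS : MeasurableSet S) :
    ∑ C ∈ P', lvol (C ∩ S) = lvol (T ∩ S) := by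
  have hd2 : (↑P' : Set (Set ℝ)).PairwiseDisjoint (fun C => C ∩ S) :=
    fun C hC D hD hne => Disjoint.mono Set.inter_subset_left Set.inter_subset_left
      (hdisj hC hD hne)
  have h1 : volume (T ∩ S) = ∑ C ∈ P', volume (C ∩ S) := by
    rw [← hU, Set.iUnion₂_inter]
    exact measure_biUnion_finset hd2 (fun C hC => (hmeas C hC).inter hS)
  unfold lvol
  rw [h1, ENNReal.toReal_sum (fun C hC =>
    vol_ne_top ((Set.inter_subset_left).trans (hsub01 C hC)))]

lemma nu1_of_subset_A {C : Set ℝ} (h : C ⊆ A) : ν₁ C = lvol C := by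
  have h1 : C ∩ Set.Ico 0 (1/2) = C := Set.inter_eq_self_of_subset_left h
  have h2 : C ∩ Set.Ico (1/2:ℝ) (3/4) = ∅ := by
    rw [Set.eq_empty_iff_forall_notMem]
    rintro x ⟨hx, hx2⟩
    have := (h hx).2; have := hx2.1; linarith
  have h3 : C ∩ Set.Icc (3/4:ℝ) 1 = ∅ := by
    rw [Set.eq_empty_iff_forall_notMem]
    rintro x ⟨hx, hx2⟩
    have := (h hx).2; have := hx2.1; linarith
  unfold ν₁; rw [h1, h2, h3, lvol_empty]; ring

lemma nu2_of_subset_A {C : Set ℝ} (h : C ⊆ A) : ν₂ C = 0 := by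
  have h1 : C ∩ Set.Icc (1/2:ℝ) 1 = ∅ := by
    rw [Set.eq_empty_iff_forall_notMem]
    rintro x ⟨hx, hx2⟩
    have := (h hx).2; have := hx2.1; linarith
  unfold ν₂; rw [h1, lvol_empty]; ring

lemma nu2_of_subset_B {C : Set ℝ} (h : C ⊆ B) : ν₂ C = 2 * lvol C := by
  have h' : C ⊆ Set.Icc (1/2:ℝ) 1 := h
  unfold ν₂; rw [Set.inter_eq_self_of_subset_left h']

lemma nu1_of_subset_B {C : Set ℝ} (h : C ⊆ B) :
    ν₁ C = (3/2) * lvol (C ∩ Set.Ico (1/2) (3/4)) + (1/2) * lvol (C ∩ Set.Icc (3/4) 1) := by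
  have h1 : C ∩ Set.Ico (0:ℝ) (1/2) = ∅ := by
    rw [Set.eq_empty_iff_forall_notMem]
    rintro x ⟨hx, hx2⟩
    have := (h hx).1; have := hx2.2; linarith
  unfold ν₁; rw [h1, lvol_empty]; ring

lemma subset_Icc_of_subset_B {C : Set ℝ} (h : C ⊆ B) : C ⊆ Set.Icc (0:ℝ) 1 :=
  fun x hx => ⟨by have := (h hx).1; linarith, (h hx).2⟩

lemma lvol_split_B {C : Set ℝ} (h : C ⊆ B) (hm : MeasurableSet C) :
    lvol (C ∩ Set.Ico (1/2) (3/4)) + lvol (C ∩ Set.Icc (3/4) 1) = lvol C := by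
  have hd : Disjoint (C ∩ Set.Ico (1/2:ℝ) (3/4)) (C ∩ Set.Icc (3/4:ℝ) 1) := by
    rw [Set.disjoint_left]
    rintro x ⟨hx, hx1⟩ ⟨hx', hx2⟩
    exact absurd hx2.1 (not_le.mpr hx1.2)
  have hu : (C ∩ Set.Ico (1/2:ℝ) (3/4)) ∪ (C ∩ Set.Icc (3/4:ℝ) 1) = C := by
    rw [← Set.inter_union_distrib_left,
      Set.Ico_union_Icc_eq_Icc (by norm_num) (by norm_num),
      Set.inter_eq_self_of_subset_left (show C ⊆ Set.Icc (1/2:ℝ) 1 from h)]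
  have hC01 : C ⊆ Set.Icc (0:ℝ) 1 := subset_Icc_of_subset_B h
  have hmu := measure_union (μ := volume) hd (hm.inter measurableSet_Icc)
  rw [hu] at hmu
  have f1 : volume (C ∩ Set.Ico (1/2:ℝ) (3/4)) ≠ ⊤ :=
    vol_ne_top ((Set.inter_subset_left).trans hC01)
  have f2 : volume (C ∩ Set.Icc (3/4:ℝ) 1) ≠ ⊤ :=
    vol_ne_top ((Set.inter_subset_left).trans hC01)
  unfold lvol
  rw [hmu, ENNReal.toReal_add f1 f2]

lemma nu1_le_of_subset_B {C : Set ℝ} (h : C ⊆ B) (hm : MeasurableSet C) :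
    ν₁ C ≤ (3/2) * lvol C := by
  have h1 := nu1_of_subset_B h
  have h2 := lvol_split_B h hm
  have h3 := lvol_nonneg (C ∩ Set.Icc (3/4:ℝ) 1)
  linarith

lemma nu1_nonneg (C : Set ℝ) : 0 ≤ ν₁ C := by
  unfold ν₁
  have := lvol_nonneg (C ∩ Set.Ico (0:ℝ) (1/2))
  have := lvol_nonneg (C ∩ Set.Ico (1/2:ℝ) (3/4))
  have := lvol_nonneg (C ∩ Set.Icc (3/4:ℝ) 1)
  linarith

/- Vlin / cost perturbation lemmas -/

lemma Vlin_add_two (P : Finset (Set ℝ)) (νf x : Set ℝ → ℝ) {C C' : Set ℝ}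
    (hC : C ∈ P) (hC' : C' ∈ P) (hne : C ≠ C') (ε δ : ℝ) :
    Vlin P νf (fun S => x S + ((if S = C then ε else 0) + (if S = C' then δ else 0)))
      = Vlin P νf x + ε / lvol C * νf C + δ / lvol C' * νf C' := by
  have key : ∀ S : Set ℝ,
      ((x S + ((if S = C then ε else 0) + (if S = C' then δ else 0))) / lvol S) * νf S
      = (x S / lvol S) * νf S + ((if S = C then ε / lvol C * νf C else 0)
          + (if S = C' then δ / lvol C' * νf C' else 0)) := by
    intro S
    by_cases h1 : S = C
    · subst h1; rw [if_pos rfl, if_neg hne, if_pos rfl, if_neg hne]; ring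
    · rw [if_neg h1, if_neg h1]
      by_cases h2 : S = C'
      · subst h2; rw [if_pos rfl, if_pos rfl]; ring
      · rw [if_neg h2, if_neg h2]; ring
  unfold Vlin
  calc ∑ S ∈ P, ((x S + ((if S = C then ε else 0) + (if S = C' then δ else 0))) / lvol S) * νf S
      = ∑ S ∈ P, ((x S / lvol S) * νf S + ((if S = C then ε / lvol C * νf C else 0)
          + (if S = C' then δ / lvol C' * νf C' else 0))) :=
        Finset.sum_congr rfl fun S _ => key S
    _ = (∑ S ∈ P, (x S / lvol S) * νf S) + ((∑ S ∈ P, if S = C then ε / lvol C * νf C else 0)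
          + ∑ S ∈ P, if S = C' then δ / lvol C' * νf C' else 0) := by
        rw [Finset.sum_add_distrib, Finset.sum_add_distrib]
    _ = _ := by
        rw [Finset.sum_ite_eq' P C (fun _ => ε / lvol C * νf C), if_pos hC,
          Finset.sum_ite_eq' P C' (fun _ => δ / lvol C' * νf C'), if_pos hC']
        ring

lemma cost_add_two (P : Finset (Set ℝ)) (q x : Set ℝ → ℝ) {C C' : Set ℝ}
    (hC : C ∈ P) (hC' : C' ∈ P) (hne : C ≠ C') (ε δ : ℝ) :
    ∑ S ∈ P, q S * (x S + ((if S = C then ε else 0) + (if S = C' then δ else 0)))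
      = (∑ S ∈ P, q S * x S) + q C * ε + q C' * δ := by
  have key : ∀ S : Set ℝ,
      q S * (x S + ((if S = C then ε else 0) + (if S = C' then δ else 0)))
      = q S * x S + ((if S = C then q C * ε else 0) + (if S = C' then q C' * δ else 0)) := by
    intro S
    by_cases h1 : S = C
    · subst h1; rw [if_pos rfl, if_neg hne, if_pos rfl, if_neg hne]; ring
    · rw [if_neg h1, if_neg h1]
      by_cases h2 : S = C'
      · subst h2; rw [if_pos rfl, if_pos rfl]; ring
      · rw [if_neg h2, if_neg h2]; ring
  calc ∑ S ∈ P, q S * (x S + ((if S = C then ε else 0) + (if S = C' then δ else 0)))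
      = ∑ S ∈ P, (q S * x S + ((if S = C then q C * ε else 0)
          + (if S = C' then q C' * δ else 0))) := Finset.sum_congr rfl fun S _ => key S
    _ = (∑ S ∈ P, q S * x S) + ((∑ S ∈ P, if S = C then q C * ε else 0)
          + ∑ S ∈ P, if S = C' then q C' * δ else 0) := by
        rw [Finset.sum_add_distrib, Finset.sum_add_distrib]
    _ = _ := by
        rw [Finset.sum_ite_eq' P C (fun _ => q C * ε), if_pos hC,
          Finset.sum_ite_eq' P C' (fun _ => q C' * δ), if_pos hC']
        ring

lemma Vlin_add_one (P : Finset (Set ℝ)) (νf x : Set ℝ → ℝ) {C : Set ℝ}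
    (hC : C ∈ P) (ε : ℝ) :
    Vlin P νf (fun S => x S + (if S = C then ε else 0))
      = Vlin P νf x + ε / lvol C * νf C := by
  have key : ∀ S : Set ℝ,
      ((x S + (if S = C then ε else 0)) / lvol S) * νf S
      = (x S / lvol S) * νf S + (if S = C then ε / lvol C * νf C else 0) := by
    intro S
    by_cases h1 : S = C
    · subst h1; rw [if_pos rfl, if_pos rfl]; ring
    · rw [if_neg h1, if_neg h1]; ring
  unfold Vlin
  calc ∑ S ∈ P, ((x S + (if S = C then ε else 0)) / lvol S) * νf S
      = ∑ S ∈ P, ((x S / lvol S) * νf S + (if S = C then ε / lvol C * νf C else 0)) :=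
        Finset.sum_congr rfl fun S _ => key S
    _ = _ := by
        rw [Finset.sum_add_distrib, Finset.sum_ite_eq' P C (fun _ => ε / lvol C * νf C),
          if_pos hC]

lemma cost_add_one (P : Finset (Set ℝ)) (q x : Set ℝ → ℝ) {C : Set ℝ}
    (hC : C ∈ P) (ε : ℝ) :
    ∑ S ∈ P, q S * (x S + (if S = C then ε else 0))
      = (∑ S ∈ P, q S * x S) + q C * ε := by
  have key : ∀ S : Set ℝ,
      q S * (x S + (if S = C then ε else 0))
      = q S * x S + (if S = C then q C * ε else 0) := by
    intro S
    by_cases h1 : S = C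
    · subst h1; rw [if_pos rfl, if_pos rfl]; ring
    · rw [if_neg h1, if_neg h1]; ring
  calc ∑ S ∈ P, q S * (x S + (if S = C then ε else 0))
      = ∑ S ∈ P, (q S * x S + (if S = C then q C * ε else 0)) :=
        Finset.sum_congr rfl fun S _ => key S
    _ = _ := by
        rw [Finset.sum_add_distrib, Finset.sum_ite_eq' P C (fun _ => q C * ε), if_pos hC]

/- sums over Fin (2*n) -/

lemma sum_fin_split {M : Type*} [AddCommMonoid M] (n : ℕ) (f g : ℕ → M) :
    (∑ i : Fin (2*n), if (i:ℕ) < n then f (i:ℕ) else g (i:ℕ))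
      = (∑ i ∈ Finset.range n, f i) + ∑ i ∈ Finset.range n, g (n + i) := by
  rw [Fin.sum_univ_eq_sum_range (fun k => if k < n then f k else g k) (2*n), two_mul,
    Finset.sum_range_add]
  congr 1
  · exact Finset.sum_congr rfl fun i hi => if_pos (Finset.mem_range.mp hi)
  · exact Finset.sum_congr rfl fun i hi => if_neg (by omega)

lemma sum_fin_const (n : ℕ) (c d : ℝ) :
    (∑ i : Fin (2*n), if (i:ℕ) < n then c else d) = n * c + n * d := by
  rw [sum_fin_split n (fun _ => c) (fun _ => d)]
  simp [Finset.sum_const, nsmul_eq_mul]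


lemma A_ne_B : A ≠ B := by
  intro h
  have h0 : (0:ℝ) ∈ A := ⟨le_refl 0, by norm_num⟩
  rw [h] at h0
  have := h0.1
  norm_num at this

lemma mem_partsπ {C : Set ℝ} : C ∈ partsπ ↔ C = A ∨ C = B := by
  simp [partsπ]

lemma sum_partsπ (f : Set ℝ → ℝ) : ∑ C ∈ partsπ, f C = f A + f B :=
  Finset.sum_pair A_ne_B

lemma lvol_A : lvol A = 1/2 := by
  show lvol (Set.Ico (0:ℝ) (1/2)) = 1/2
  rw [lvol_Ico (by norm_num)]; norm_num

lemma lvol_B : lvol B = 1/2 := by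
  show lvol (Set.Icc (1/2:ℝ) 1) = 1/2
  rw [lvol_Icc (by norm_num)]; norm_num

lemma nu1_A_val : ν₁ A = 1/2 := by
  rw [nu1_of_subset_A (Set.Subset.refl A), lvol_A]

lemma nu1_B_val : ν₁ B = 1/2 := by
  rw [nu1_of_subset_B (Set.Subset.refl B)]
  have h1 : B ∩ Set.Ico (1/2:ℝ) (3/4) = Set.Ico (1/2:ℝ) (3/4) :=
    Set.inter_eq_self_of_subset_right (fun x hx => ⟨hx.1, by have := hx.2; norm_num; linarith⟩)
  have h2 : B ∩ Set.Icc (3/4:ℝ) 1 = Set.Icc (3/4:ℝ) 1 :=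
    Set.inter_eq_self_of_subset_right (fun x hx => ⟨by have := hx.1; norm_num; linarith, hx.2⟩)
  rw [h1, h2, lvol_Ico (by norm_num), lvol_Icc (by norm_num)]
  norm_num

lemma nu2_A_val : ν₂ A = 0 := nu2_of_subset_A (Set.Subset.refl A)

lemma nu2_B_val : ν₂ B = 1 := by
  rw [nu2_of_subset_B (Set.Subset.refl B), lvol_B]; norm_num

lemma Vlin_partsπ (νf x : Set ℝ → ℝ) :
    Vlin partsπ νf x = (x A / lvol A) * νf A + (x B / lvol B) * νf B :=
  sum_partsπ _

lemma part_a (n : ℕ) (hn : 0 < n) :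
    IsEqm partsπ (κ n) (fun i => Vlin partsπ (νs n i)) (fun _ => 1) (xs n) ∧
      ∑ i, Vlin partsπ (νs n i) (xs n i) = 3/2 := by
  have hnR : (0:ℝ) < (n:ℝ) := by exact_mod_cast hn
  have hc1 : (0:ℝ) ≤ 1 / (2 * (n:ℝ)) := by positivity
  have hxs : ∀ (i : Fin (2*n)) (S : Set ℝ),
      xs n i S = if (i:ℕ) < n then (if S = A then 1 / (2 * (n:ℝ)) else 0)
        else (if S = B then 1 / (2 * (n:ℝ)) else 0) := fun i S => rfl
  have hxsA : ∀ i : Fin (2*n), xs n i A = if (i:ℕ) < n then 1 / (2 * (n:ℝ)) else 0 := by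
    intro i; rw [hxs]
    by_cases h : (i:ℕ) < n
    · rw [if_pos h, if_pos h, if_pos rfl]
    · rw [if_neg h, if_neg h, if_neg A_ne_B]
  have hxsB : ∀ i : Fin (2*n), xs n i B = if (i:ℕ) < n then 0 else 1 / (2 * (n:ℝ)) := by
    intro i; rw [hxs]
    by_cases h : (i:ℕ) < n
    · rw [if_pos h, if_pos h, if_neg (Ne.symm A_ne_B)]
    · rw [if_neg h, if_neg h, if_pos rfl]
  have hW : ∑ C ∈ partsπ, (fun _ : Set ℝ => (1:ℝ)) C * lvol C = 1 := by
    rw [sum_partsπ]; rw [lvol_A, lvol_B]; norm_num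
  have hVx : ∀ i : Fin (2*n), Vlin partsπ (νs n i) (xs n i)
      = if (i:ℕ) < n then 1 / (2 * (n:ℝ)) else 2 * (1 / (2 * (n:ℝ))) := by
    intro i
    rw [Vlin_partsπ, hxsA, hxsB, lvol_A, lvol_B]
    by_cases h : (i:ℕ) < n
    · have hν : νs n i = ν₁ := if_pos h
      rw [if_pos h, if_pos h, if_pos h, hν, nu1_A_val, nu1_B_val]
      ring
    · have hν : νs n i = ν₂ := if_neg h
      rw [if_neg h, if_neg h, if_neg h, hν, nu2_A_val, nu2_B_val]
      ring
  constructor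
  · refine ⟨?_, ?_, ?_, ?_, ?_⟩
    · intro C _; norm_num
    · intro i C _
      rw [hxs]
      split_ifs <;> simp [hc1]
    · intro C hC
      rcases mem_partsπ.mp hC with h | h <;> subst h
      · have : ∑ i : Fin (2*n), xs n i A = ∑ i : Fin (2*n), (if (i:ℕ) < n then 1 / (2 * (n:ℝ)) else 0) :=
          Finset.sum_congr rfl fun i _ => hxsA i
        rw [this, sum_fin_const, lvol_A]
        rw [mul_zero, add_zero]
        rw [mul_one_div]
        rw [div_le_iff₀ (by positivity)]
        ring_nf
        nlinarith [hnR]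
      · have : ∑ i : Fin (2*n), xs n i B = ∑ i : Fin (2*n), (if (i:ℕ) < n then 0 else 1 / (2 * (n:ℝ))) :=
          Finset.sum_congr rfl fun i _ => hxsB i
        rw [this, sum_fin_const, lvol_B]
        rw [mul_zero, zero_add, mul_one_div]
        rw [div_le_iff₀ (by positivity)]
        nlinarith [hnR]
    · intro i
      rw [hW, sum_partsπ (fun C => (fun _ : Set ℝ => (1:ℝ)) C * xs n i C)]
      rw [hxsA, hxsB]
      show 1 * _ + 1 * _ ≤ κ n i * 1
      have hκ : κ n i = 1 / (2 * (n:ℝ)) := rfl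
      rw [hκ]
      by_cases h : (i:ℕ) < n
      · rw [if_pos h, if_pos h]; ring_nf; linarith
      · rw [if_neg h, if_neg h]; ring_nf; linarith
    · intro i y hy hV
      rw [hW, mul_one]
      have hκ : κ n i = 1 / (2 * (n:ℝ)) := rfl
      rw [hκ]
      have hV : Vlin partsπ (νs n i) (xs n i) < Vlin partsπ (νs n i) y := hV
      rw [hVx i] at hV
      rw [Vlin_partsπ, lvol_A, lvol_B] at hV
      rw [sum_partsπ (fun C => (fun _ : Set ℝ => (1:ℝ)) C * y C)]
      show 1 / (2 * (n:ℝ)) < 1 * y A + 1 * y B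
      have hyA : 0 ≤ y A := hy A (mem_partsπ.mpr (Or.inl rfl))
      have hyB : 0 ≤ y B := hy B (mem_partsπ.mpr (Or.inr rfl))
      by_cases h : (i:ℕ) < n
      · have hν : νs n i = ν₁ := if_pos h
        rw [if_pos h, hν, nu1_A_val, nu1_B_val] at hV
        have : 1 / (2 * (n:ℝ)) < y A + y B := by
          have := hV
          nlinarith
        linarith
      · have hν : νs n i = ν₂ := if_neg h
        rw [if_neg h, hν, nu2_A_val, nu2_B_val] at hV
        have : 1 / (2 * (n:ℝ)) < y B := by nlinarith
        linarith
  · have : ∑ i : Fin (2*n), Vlin partsπ (νs n i) (xs n i)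
        = ∑ i : Fin (2*n), (if (i:ℕ) < n then 1 / (2 * (n:ℝ)) else 2 * (1 / (2 * (n:ℝ)))) :=
      Finset.sum_congr rfl fun i _ => hVx i
    rw [this, sum_fin_const]
    field_simp
    ring

def gsum1 (n : ℕ) (y : Fin (2*n) → Set ℝ → ℝ) (C : Set ℝ) : ℝ :=
  ∑ i : Fin (2*n), if (i:ℕ) < n then y i C else 0

def gsum2 (n : ℕ) (y : Fin (2*n) → Set ℝ → ℝ) (C : Set ℝ) : ℝ :=
  ∑ i : Fin (2*n), if (i:ℕ) < n then 0 else y i C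

lemma div_mul_twice (X l : ℝ) (hl : l ≠ 0) : X / l * (2 * l) = 2 * X := by
  field_simp

lemma div_mul_once (X l : ℝ) (hl : l ≠ 0) : X / l * l = X := div_mul_cancel₀ X hl

set_option maxHeartbeats 1000000 in
lemma part_b (n : ℕ) (hn : 0 < n) (ρ : Classification)
    (href : ∀ S ∈ ρ.parts, S ⊆ A ∨ S ⊆ B)
    (hsplit : ∃ S₁ ∈ ρ.parts, ∃ S₂ ∈ ρ.parts, S₁ ≠ S₂ ∧ S₁ ⊆ B ∧ S₂ ⊆ B)
    (q : Set ℝ → ℝ) (y : Fin (2 * n) → Set ℝ → ℝ)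
    (heqm : IsEqm ρ.parts (κ n) (fun i => Vlin ρ.parts (νs n i)) q y) :
    ∑ i, Vlin ρ.parts (νs n i) (y i) < 3/2 := by
  obtain ⟨S₁, hS₁m, S₂, hS₂m, hS₁₂, hS₁B, hS₂B⟩ := hsplit
  by_contra h32
  rw [not_lt] at h32
  have hnR : (0:ℝ) < (n:ℝ) := by exact_mod_cast hn
  obtain ⟨hq0, hynn, hfeas, hbudget, himpr⟩ := heqm
  have himpr' : ∀ i (z : Set ℝ → ℝ), (∀ C ∈ ρ.parts, 0 ≤ z C) →
      Vlin ρ.parts (νs n i) (y i) < Vlin ρ.parts (νs n i) z →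
      κ n i * ∑ C ∈ ρ.parts, q C * lvol C < ∑ C ∈ ρ.parts, q C * z C := himpr
  -- basic facts about parts
  have hmeas : ∀ C ∈ ρ.parts, MeasurableSet C :=
    fun C hC => (ρ.isInterval C hC).measurableSet
  have hsub01 : ∀ C ∈ ρ.parts, C ⊆ Set.Icc (0:ℝ) 1 := by
    intro C hC
    rw [← ρ.cover]
    exact Set.subset_sUnion_of_mem (Finset.mem_coe.mpr hC)
  have hfin : ∀ C ∈ ρ.parts, volume C ≠ ⊤ := fun C hC => vol_ne_top (hsub01 C hC)
  have hlpos : ∀ C ∈ ρ.parts, 0 < lvol C :=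
    fun C hC => ENNReal.toReal_pos (ρ.posMeas C hC).ne' (hfin C hC)
  have hne : ∀ C ∈ ρ.parts, C.Nonempty := by
    intro C hC
    rcases Set.eq_empty_or_nonempty C with h | h
    · exfalso; have := ρ.posMeas C hC; rw [h] at this; simp at this
    · exact h
  have hABdisj : ∀ x : ℝ, x ∈ A → x ∈ B → False := by
    intro x hA hB; exact absurd hB.1 (not_le.mpr hA.2)
  have hnotA : ∀ C ∈ ρ.parts, C ⊆ B → ¬ C ⊆ A := by
    intro C hC hCB hCA
    obtain ⟨x, hx⟩ := hne C hC
    exact hABdisj x (hCA hx) (hCB hx)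
  -- the two families
  set PA := ρ.parts.filter (fun C => C ⊆ A) with hPAdef
  set PB := ρ.parts.filter (fun C => ¬ C ⊆ A) with hPBdef
  have hPAmem : ∀ C ∈ PA, C ∈ ρ.parts := fun C hC => (Finset.mem_filter.mp hC).1
  have hPBmem : ∀ C ∈ PB, C ∈ ρ.parts := fun C hC => (Finset.mem_filter.mp hC).1
  have hPAsub : ∀ C ∈ PA, C ⊆ A := fun C hC => (Finset.mem_filter.mp hC).2
  have hPBsub : ∀ C ∈ PB, C ⊆ B := fun C hC =>
    (href C (hPBmem C hC)).resolve_left (Finset.mem_filter.mp hC).2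
  have hS₁PB : S₁ ∈ PB := Finset.mem_filter.mpr ⟨hS₁m, hnotA S₁ hS₁m hS₁B⟩
  have hS₂PB : S₂ ∈ PB := Finset.mem_filter.mpr ⟨hS₂m, hnotA S₂ hS₂m hS₂B⟩
  have hsum_split : ∀ f : Set ℝ → ℝ,
      ∑ C ∈ ρ.parts, f C = (∑ C ∈ PA, f C) + ∑ C ∈ PB, f C := by
    intro f
    rw [hPAdef, hPBdef]
    exact (Finset.sum_filter_add_sum_filter_not ρ.parts _ f).symm
  -- covers
  have hUA : (⋃ C ∈ PA, C) = A := by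
    apply Set.Subset.antisymm
    · intro x hx
      simp only [Set.mem_iUnion] at hx
      obtain ⟨C, hC, hxC⟩ := hx
      exact hPAsub C hC hxC
    · intro x hxA
      have hx01 : x ∈ Set.Icc (0:ℝ) 1 := ⟨hxA.1, by have := hxA.2; norm_num; linarith⟩
      rw [← ρ.cover] at hx01
      obtain ⟨C, hCmem, hxC⟩ := hx01
      have hCP : C ∈ ρ.parts := Finset.mem_coe.mp hCmem
      rcases href C hCP with h | h
      · exact Set.mem_biUnion (Finset.mem_filter.mpr ⟨hCP, h⟩) hxC
      · exact absurd (h hxC) (fun hB => hABdisj x hxA hB)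
  have hUB : (⋃ C ∈ PB, C) = B := by
    apply Set.Subset.antisymm
    · intro x hx
      simp only [Set.mem_iUnion] at hx
      obtain ⟨C, hC, hxC⟩ := hx
      exact hPBsub C hC hxC
    · intro x hxB
      have hx01 : x ∈ Set.Icc (0:ℝ) 1 := ⟨by have := hxB.1; norm_num; linarith, hxB.2⟩
      rw [← ρ.cover] at hx01
      obtain ⟨C, hCmem, hxC⟩ := hx01
      have hCP : C ∈ ρ.parts := Finset.mem_coe.mp hCmem
      rcases href C hCP with h | h
      · exact absurd (h hxC) (fun hA => hABdisj x hA hxB)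
      · exact Set.mem_biUnion (Finset.mem_filter.mpr ⟨hCP, hnotA C hCP h⟩) hxC
  have hdisjPA : (↑PA : Set (Set ℝ)).PairwiseDisjoint id :=
    ρ.pairwiseDisj.subset (by
      intro C hC
      exact Finset.mem_coe.mpr (hPAmem C (Finset.mem_coe.mp hC)))
  have hdisjPB : (↑PB : Set (Set ℝ)).PairwiseDisjoint id :=
    ρ.pairwiseDisj.subset (by
      intro C hC
      exact Finset.mem_coe.mpr (hPBmem C (Finset.mem_coe.mp hC)))
  -- measure sums
  have hsumA : ∑ C ∈ PA, lvol C = 1/2 := by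
    have h := sum_lvol_inter PA hdisjPA (fun C hC => hmeas C (hPAmem C hC))
      (fun C hC => hsub01 C (hPAmem C hC)) hUA MeasurableSet.univ
    simp only [Set.inter_univ] at h
    rw [h, lvol_A]
  have hsumB : ∑ C ∈ PB, lvol C = 1/2 := by
    have h := sum_lvol_inter PB hdisjPB (fun C hC => hmeas C (hPBmem C hC))
      (fun C hC => hsub01 C (hPBmem C hC)) hUB MeasurableSet.univ
    simp only [Set.inter_univ] at h
    rw [h, lvol_B]
  have ha_sum : ∑ C ∈ PB, lvol (C ∩ Set.Ico (1/2) (3/4)) = 1/4 := by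
    have h := sum_lvol_inter PB hdisjPB (fun C hC => hmeas C (hPBmem C hC))
      (fun C hC => hsub01 C (hPBmem C hC)) hUB (measurableSet_Ico (a := (1/2:ℝ)) (b := (3/4:ℝ)))
    rw [h]
    have h1 : B ∩ Set.Ico (1/2:ℝ) (3/4) = Set.Ico (1/2:ℝ) (3/4) :=
      Set.inter_eq_self_of_subset_right (fun x hx => ⟨hx.1, by have := hx.2; norm_num; linarith⟩)
    rw [h1, lvol_Ico (by norm_num)]
    norm_num
  have hb_sum : ∑ C ∈ PB, lvol (C ∩ Set.Icc (3/4) 1) = 1/4 := by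
    have h := sum_lvol_inter PB hdisjPB (fun C hC => hmeas C (hPBmem C hC))
      (fun C hC => hsub01 C (hPBmem C hC)) hUB (measurableSet_Icc (a := (3/4:ℝ)) (b := (1:ℝ)))
    rw [h]
    have h1 : B ∩ Set.Icc (3/4:ℝ) 1 = Set.Icc (3/4:ℝ) 1 :=
      Set.inter_eq_self_of_subset_right (fun x hx => ⟨by have := hx.1; norm_num; linarith, hx.2⟩)
    rw [h1, lvol_Icc (by norm_num)]
    norm_num
  -- group sums
  have hS1nn : ∀ C ∈ ρ.parts, 0 ≤ gsum1 n y C := by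
    intro C hC
    exact Finset.sum_nonneg fun i _ => by
      by_cases h : (i:ℕ) < n
      · rw [if_pos h]; exact hynn i C hC
      · rw [if_neg h]
  have hS2nn : ∀ C ∈ ρ.parts, 0 ≤ gsum2 n y C := by
    intro C hC
    exact Finset.sum_nonneg fun i _ => by
      by_cases h : (i:ℕ) < n
      · rw [if_pos h]
      · rw [if_neg h]; exact hynn i C hC
  have hS12 : ∀ C ∈ ρ.parts, gsum1 n y C + gsum2 n y C ≤ lvol C := by
    intro C hC
    have h : gsum1 n y C + gsum2 n y C = ∑ i : Fin (2*n), y i C := by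
      unfold gsum1 gsum2
      rw [← Finset.sum_add_distrib]
      exact Finset.sum_congr rfl fun i _ => by by_cases h : (i:ℕ) < n <;> simp [h]
    rw [h]
    exact hfeas C hC
  -- utility decomposition
  have hu : ∀ C ∈ ρ.parts, (∑ i : Fin (2*n), (y i C / lvol C) * νs n i C)
      = (ν₁ C / lvol C) * gsum1 n y C + (ν₂ C / lvol C) * gsum2 n y C := by
    intro C hC
    unfold gsum1 gsum2
    rw [Finset.mul_sum, Finset.mul_sum, ← Finset.sum_add_distrib]
    refine Finset.sum_congr rfl fun i _ => ?_
    unfold νs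
    by_cases h : (i:ℕ) < n <;> simp only [h, if_pos, if_neg, if_true, if_false] <;> ring
  have htot : ∑ i, Vlin ρ.parts (νs n i) (y i)
      = ∑ C ∈ ρ.parts, ((ν₁ C / lvol C) * gsum1 n y C + (ν₂ C / lvol C) * gsum2 n y C) := by
    unfold Vlin
    rw [Finset.sum_comm]
    exact Finset.sum_congr rfl hu
  -- pointwise bound and forcing
  have hboundsum : ∑ C ∈ ρ.parts, (if C ⊆ A then lvol C else 2 * lvol C) = 3/2 := by
    rw [hsum_split]
    have e1 : ∑ C ∈ PA, (if C ⊆ A then lvol C else 2 * lvol C) = ∑ C ∈ PA, lvol C :=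
      Finset.sum_congr rfl fun C hC => if_pos (hPAsub C hC)
    have e2 : ∑ C ∈ PB, (if C ⊆ A then lvol C else 2 * lvol C) = ∑ C ∈ PB, 2 * lvol C :=
      Finset.sum_congr rfl fun C hC => if_neg (Finset.mem_filter.mp hC).2
    rw [e1, e2, hsumA, ← Finset.mul_sum, hsumB]
    norm_num
  have hpoint : ∀ C ∈ ρ.parts,
      (ν₁ C / lvol C) * gsum1 n y C + (ν₂ C / lvol C) * gsum2 n y C
        ≤ (if C ⊆ A then lvol C else 2 * lvol C) := by
    intro C hC
    have hl := hlpos C hC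
    have h1 := hS1nn C hC
    have h2 := hS2nn C hC
    have h12 := hS12 C hC
    by_cases h : C ⊆ A
    · rw [if_pos h, nu1_of_subset_A h, nu2_of_subset_A h, div_self (ne_of_gt hl),
        zero_div, zero_mul, add_zero, one_mul]
      linarith
    · rw [if_neg h]
      have hCB : C ⊆ B := (href C hC).resolve_left h
      rw [nu2_of_subset_B hCB]
      have e2 : 2 * lvol C / lvol C = 2 := by field_simp
      rw [e2]
      have hd : ν₁ C / lvol C ≤ 3/2 := by
        rw [div_le_iff₀ hl]
        exact nu1_le_of_subset_B hCB (hmeas C hC)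
      have := mul_le_mul_of_nonneg_right hd h1
      linarith
  have hforce : ∀ C ∈ ρ.parts,
      (ν₁ C / lvol C) * gsum1 n y C + (ν₂ C / lvol C) * gsum2 n y C
        = (if C ⊆ A then lvol C else 2 * lvol C) := by
    by_contra hcon
    push_neg at hcon
    obtain ⟨C0, hC0, hne0⟩ := hcon
    have hlt := Finset.sum_lt_sum hpoint ⟨C0, hC0, lt_of_le_of_ne (hpoint C0 hC0) hne0⟩
    rw [hboundsum, ← htot] at hlt
    linarith
  -- allocation structure
  have hS1A : ∀ C ∈ PA, gsum1 n y C = lvol C := by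
    intro C hC
    have h := hforce C (hPAmem C hC)
    rw [if_pos (hPAsub C hC), nu1_of_subset_A (hPAsub C hC),
      nu2_of_subset_A (hPAsub C hC), div_self (ne_of_gt (hlpos C (hPAmem C hC))),
      zero_div, zero_mul, add_zero, one_mul] at h
    exact h
  have hS1B0 : ∀ C ∈ PB, gsum1 n y C = 0 := by
    intro C hC
    have hCP := hPBmem C hC
    have hCB := hPBsub C hC
    have h := hforce C hCP
    rw [if_neg (Finset.mem_filter.mp hC).2, nu2_of_subset_B hCB] at h
    have hl := hlpos C hCP
    have e2 : 2 * lvol C / lvol C = 2 := by field_simp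
    rw [e2] at h
    have hd : ν₁ C / lvol C ≤ 3/2 := by
      rw [div_le_iff₀ hl]
      exact nu1_le_of_subset_B hCB (hmeas C hCP)
    have h1 := hS1nn C hCP
    have h2 := hS2nn C hCP
    have h12 := hS12 C hCP
    have := mul_le_mul_of_nonneg_right hd h1
    linarith
  have hS2B : ∀ C ∈ PB, gsum2 n y C = lvol C := by
    intro C hC
    have hCP := hPBmem C hC
    have hCB := hPBsub C hC
    have h := hforce C hCP
    rw [if_neg (Finset.mem_filter.mp hC).2, nu2_of_subset_B hCB, hS1B0 C hC, mul_zero,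
      zero_add] at h
    have hl := hlpos C hCP
    have e2 : 2 * lvol C / lvol C = 2 := by field_simp
    rw [e2] at h
    linarith
  -- positive prices
  have hqpos : ∀ C ∈ ρ.parts, 0 < q C := by
    intro C hC
    rcases lt_or_eq_of_le (hq0 C hC) with h | h
    · exact h
    exfalso
    have hl := hlpos C hC
    have hval : ∃ i : Fin (2*n), 0 < νs n i C := by
      by_cases hA : C ⊆ A
      · refine ⟨⟨0, by omega⟩, ?_⟩
        have : νs n ⟨0, by omega⟩ = ν₁ := if_pos hn
        rw [this, nu1_of_subset_A hA]
        exact hl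
      · refine ⟨⟨n, by omega⟩, ?_⟩
        have : νs n ⟨n, by omega⟩ = ν₂ := if_neg (lt_irrefl n)
        rw [this, nu2_of_subset_B ((href C hC).resolve_left hA)]
        linarith
    obtain ⟨i, hi⟩ := hval
    have hV : Vlin ρ.parts (νs n i) (y i)
        < Vlin ρ.parts (νs n i) (fun S => y i S + (if S = C then 1 else 0)) := by
      rw [Vlin_add_one ρ.parts (νs n i) (y i) hC 1]
      have : 0 < 1 / lvol C * νs n i C := by positivity
      linarith
    have hkey := himpr' i _ (fun S hS => add_nonneg (hynn i S hS)
      (by split_ifs <;> norm_num)) hV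
    rw [cost_add_one ρ.parts q (y i) hC 1, ← h] at hkey
    have hb := hbudget i
    linarith
  -- exchange argument
  have hexch : ∀ (i : Fin (2*n)), ∀ C ∈ ρ.parts, ∀ C' ∈ ρ.parts, C ≠ C' → 0 < y i C →
      ¬ (Vlin ρ.parts (νs n i) (y i) < Vlin ρ.parts (νs n i)
        (fun S => y i S + ((if S = C then -(y i C) else 0)
          + (if S = C' then q C * y i C / q C' else 0)))) := by
    intro i C hC C' hC' hCC' hyi hV
    have hq' := hqpos C' hC'
    have hy' : ∀ S ∈ ρ.parts, 0 ≤ y i S + ((if S = C then -(y i C) else 0)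
        + (if S = C' then q C * y i C / q C' else 0)) := by
      intro S hS
      by_cases h1 : S = C
      · subst h1
        rw [if_pos rfl, if_neg hCC']
        simp
      · rw [if_neg h1]
        by_cases h2 : S = C'
        · rw [if_pos h2]
          have h3 : 0 ≤ q C * y i C / q C' :=
            div_nonneg (mul_nonneg (hq0 C hC) hyi.le) hq'.le
          have h4 := hynn i S hS
          linarith
        · rw [if_neg h2]
          have := hynn i S hS
          linarith
    have hkey := himpr' i _ hy' hV
    rw [cost_add_two ρ.parts q (y i) hC hC' hCC' (-(y i C)) (q C * y i C / q C')] at hkey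
    have e : q C' * (q C * y i C / q C') = q C * y i C := by field_simp
    have hb := hbudget i
    rw [e] at hkey
    have : q C * -(y i C) = -(q C * y i C) := by ring
    rw [this] at hkey
    linarith
  -- holder extraction
  have holder1 : ∀ C ∈ PA, ∃ i : Fin (2*n), (i:ℕ) < n ∧ 0 < y i C := by
    intro C hC
    have hpos : (0:ℝ) < gsum1 n y C := by
      rw [hS1A C hC]; exact hlpos C (hPAmem C hC)
    obtain ⟨i, -, hi⟩ := Finset.exists_ne_zero_of_sum_ne_zero
      (by rw [show (∑ i : Fin (2*n), if (i:ℕ) < n then y i C else 0) = gsum1 n y C from rfl]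
          exact ne_of_gt hpos)
    by_cases h : (i:ℕ) < n
    · rw [if_pos h] at hi
      exact ⟨i, h, lt_of_le_of_ne (hynn i C (hPAmem C hC)) (Ne.symm hi)⟩
    · rw [if_neg h] at hi
      exact absurd rfl hi
  have holder2 : ∀ C ∈ PB, ∃ i : Fin (2*n), ¬ (i:ℕ) < n ∧ 0 < y i C := by
    intro C hC
    have hpos : (0:ℝ) < gsum2 n y C := by
      rw [hS2B C hC]; exact hlpos C (hPBmem C hC)
    obtain ⟨i, -, hi⟩ := Finset.exists_ne_zero_of_sum_ne_zero
      (by rw [show (∑ i : Fin (2*n), if (i:ℕ) < n then 0 else y i C) = gsum2 n y C from rfl]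
          exact ne_of_gt hpos)
    by_cases h : (i:ℕ) < n
    · rw [if_pos h] at hi
      exact absurd rfl hi
    · rw [if_neg h] at hi
      exact ⟨i, h, lt_of_le_of_ne (hynn i C (hPBmem C hC)) (Ne.symm hi)⟩
  -- prices are equal within PB
  have hqB_le : ∀ C ∈ PB, ∀ C' ∈ PB, C ≠ C' → q C ≤ q C' := by
    intro C hC C' hC' hCC'
    by_contra hgt
    push_neg at hgt
    obtain ⟨i, hin, hyi⟩ := holder2 C hC
    have hCP := hPBmem C hC
    have hC'P := hPBmem C' hC'
    apply hexch i C hCP C' hC'P hCC' hyi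
    rw [Vlin_add_two ρ.parts (νs n i) (y i) hCP hC'P hCC']
    have hν : νs n i = ν₂ := if_neg hin
    rw [hν, nu2_of_subset_B (hPBsub C hC), nu2_of_subset_B (hPBsub C' hC')]
    have hlC := hlpos C hCP
    have hlC' := hlpos C' hC'P
    rw [div_mul_twice (-(y i C)) (lvol C) (ne_of_gt hlC),
      div_mul_twice (q C * y i C / q C') (lvol C') (ne_of_gt hlC')]
    have hq' := hqpos C' hC'P
    have hδ : y i C < q C * y i C / q C' := by
      rw [lt_div_iff₀ hq']
      nlinarith
    linarith
  have hqB : ∀ C ∈ PB, q C = q S₁ := by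
    intro C hC
    by_cases h : C = S₁
    · rw [h]
    · exact le_antisymm (hqB_le C hC S₁ hS₁PB h) (hqB_le S₁ hS₁PB C hC (Ne.symm h))
  -- PA is nonempty
  have hAne : (0:ℝ) ∈ A := ⟨le_refl 0, by norm_num⟩
  have h0mem : (0:ℝ) ∈ ⋃ C ∈ PA, C := by rw [hUA]; exact hAne
  obtain ⟨C₀, hC₀PA, h0C₀⟩ := by
    simpa only [Set.mem_iUnion, exists_prop] using h0mem
  have hC₀P := hPAmem C₀ hC₀PA
  -- prices are equal within PA
  have hqA_le : ∀ C ∈ PA, ∀ C' ∈ PA, C ≠ C' → q C ≤ q C' := by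
    intro C hC C' hC' hCC'
    by_contra hgt
    push_neg at hgt
    obtain ⟨i, hin, hyi⟩ := holder1 C hC
    have hCP := hPAmem C hC
    have hC'P := hPAmem C' hC'
    apply hexch i C hCP C' hC'P hCC' hyi
    rw [Vlin_add_two ρ.parts (νs n i) (y i) hCP hC'P hCC']
    have hν : νs n i = ν₁ := if_pos hin
    rw [hν, nu1_of_subset_A (hPAsub C hC), nu1_of_subset_A (hPAsub C' hC')]
    have hlC := hlpos C hCP
    have hlC' := hlpos C' hC'P
    rw [div_mul_once (-(y i C)) (lvol C) (ne_of_gt hlC),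
      div_mul_once (q C * y i C / q C') (lvol C') (ne_of_gt hlC')]
    have hq' := hqpos C' hC'P
    have hδ : y i C < q C * y i C / q C' := by
      rw [lt_div_iff₀ hq']
      nlinarith
    linarith
  have hqA : ∀ C ∈ PA, q C = q C₀ := by
    intro C hC
    by_cases h : C = C₀
    · rw [h]
    · exact le_antisymm (hqA_le C hC C₀ hC₀PA h) (hqA_le C₀ hC₀PA C hC (Ne.symm h))
  -- total wealth
  have hW : ∑ C ∈ ρ.parts, q C * lvol C = q C₀ * (1/2) + q S₁ * (1/2) := by
    rw [hsum_split]
    congr 1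
    · rw [show (∑ C ∈ PA, q C * lvol C) = ∑ C ∈ PA, q C₀ * lvol C from
        Finset.sum_congr rfl fun C hC => by rw [hqA C hC], ← Finset.mul_sum, hsumA]
    · rw [show (∑ C ∈ PB, q C * lvol C) = ∑ C ∈ PB, q S₁ * lvol C from
        Finset.sum_congr rfl fun C hC => by rw [hqB C hC], ← Finset.mul_sum, hsumB]
  -- group budgets
  have hgroup : ∀ b : Bool, (∑ C ∈ ρ.parts, q C * (if b then gsum1 n y C else gsum2 n y C))
      ≤ (n:ℝ) * ((1/(2*(n:ℝ))) * ∑ C ∈ ρ.parts, q C * lvol C) := by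
    intro b
    have hswap : (∑ C ∈ ρ.parts, q C * (if b then gsum1 n y C else gsum2 n y C))
        = ∑ i : Fin (2*n), (if (if b then (i:ℕ) < n else ¬ (i:ℕ) < n)
            then ∑ C ∈ ρ.parts, q C * y i C else 0) := by
      calc (∑ C ∈ ρ.parts, q C * (if b then gsum1 n y C else gsum2 n y C))
          = ∑ C ∈ ρ.parts, ∑ i : Fin (2*n),
              (if (if b then (i:ℕ) < n else ¬ (i:ℕ) < n) then q C * y i C else 0) := by
            refine Finset.sum_congr rfl fun C _ => ?_
            cases b
            · simp only [if_false, Bool.false_eq_true]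
              unfold gsum2
              rw [Finset.mul_sum]
              refine Finset.sum_congr rfl fun i _ => ?_
              by_cases h : (i:ℕ) < n <;> simp [h]
            · simp only [if_true]
              unfold gsum1
              rw [Finset.mul_sum]
              refine Finset.sum_congr rfl fun i _ => ?_
              by_cases h : (i:ℕ) < n <;> simp [h]
        _ = ∑ i : Fin (2*n), ∑ C ∈ ρ.parts,
              (if (if b then (i:ℕ) < n else ¬ (i:ℕ) < n) then q C * y i C else 0) :=
            Finset.sum_comm
        _ = _ := by
            refine Finset.sum_congr rfl fun i _ => ?_
            by_cases h : (if b then (i:ℕ) < n else ¬ (i:ℕ) < n)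
            · rw [if_pos h]
              exact Finset.sum_congr rfl fun C _ => if_pos h
            · rw [if_neg h]
              simp only [if_neg h, Finset.sum_const_zero]
    rw [hswap]
    have hbd : ∀ i : Fin (2*n),
        (if (if b then (i:ℕ) < n else ¬ (i:ℕ) < n) then ∑ C ∈ ρ.parts, q C * y i C else 0)
          ≤ (if (if b then (i:ℕ) < n else ¬ (i:ℕ) < n)
              then (1/(2*(n:ℝ))) * ∑ C ∈ ρ.parts, q C * lvol C else 0) := by
      intro i
      by_cases h : (if b then (i:ℕ) < n else ¬ (i:ℕ) < n)
      · rw [if_pos h, if_pos h]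
        exact hbudget i
      · rw [if_neg h, if_neg h]
    calc _ ≤ ∑ i : Fin (2*n), (if (if b then (i:ℕ) < n else ¬ (i:ℕ) < n)
            then (1/(2*(n:ℝ))) * ∑ C ∈ ρ.parts, q C * lvol C else 0) :=
          Finset.sum_le_sum fun i _ => hbd i
      _ ≤ (n:ℝ) * ((1/(2*(n:ℝ))) * ∑ C ∈ ρ.parts, q C * lvol C) := by
          cases b
          · simp only [Bool.false_eq_true, if_false]
            rw [show (∑ i : Fin (2*n), (if ¬ (i:ℕ) < n
                then (1/(2*(n:ℝ))) * ∑ C ∈ ρ.parts, q C * lvol C else 0))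
              = ∑ i : Fin (2*n), (if (i:ℕ) < n then 0
                else (1/(2*(n:ℝ))) * ∑ C ∈ ρ.parts, q C * lvol C) from
              Finset.sum_congr rfl fun i _ => by by_cases h : (i:ℕ) < n <;> simp [h]]
            rw [sum_fin_const]
            linarith
          · simp only [if_true]
            rw [sum_fin_const]
            linarith
  -- compute group spendings
  have hspend1 : ∑ C ∈ ρ.parts, q C * gsum1 n y C = q C₀ * (1/2) := by
    rw [hsum_split]
    have e1 : ∑ C ∈ PA, q C * gsum1 n y C = ∑ C ∈ PA, q C₀ * lvol C :=
      Finset.sum_congr rfl fun C hC => by rw [hqA C hC, hS1A C hC]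
    have e2 : ∑ C ∈ PB, q C * gsum1 n y C = 0 := by
      rw [show (0:ℝ) = ∑ C ∈ PB, (0:ℝ) by simp]
      exact Finset.sum_congr rfl fun C hC => by rw [hS1B0 C hC, mul_zero]
    rw [e1, e2, ← Finset.mul_sum, hsumA, add_zero]
  have hspend2 : q S₁ * (1/2) ≤ ∑ C ∈ ρ.parts, q C * gsum2 n y C := by
    rw [hsum_split]
    have e2 : ∑ C ∈ PB, q C * gsum2 n y C = ∑ C ∈ PB, q S₁ * lvol C :=
      Finset.sum_congr rfl fun C hC => by rw [hqB C hC, hS2B C hC]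
    have e1 : 0 ≤ ∑ C ∈ PA, q C * gsum2 n y C :=
      Finset.sum_nonneg fun C hC =>
        mul_nonneg (hq0 C (hPAmem C hC)) (hS2nn C (hPAmem C hC))
    rw [e2, ← Finset.mul_sum, hsumB]
    linarith
  have hn2 : (n:ℝ) * (1/(2*(n:ℝ))) = 1/2 := by field_simp
  have hg1 := hgroup true
  have hg2 := hgroup false
  simp only [if_true, Bool.false_eq_true, if_false] at hg1 hg2
  rw [hspend1] at hg1
  have hqeq : q C₀ = q S₁ := by
    have h1 : q C₀ * (1/2) ≤ (n:ℝ) * ((1/(2*(n:ℝ))) * (q C₀ * (1/2) + q S₁ * (1/2))) := by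
      rw [← hW]; exact hg1
    have h2 : q S₁ * (1/2) ≤ (n:ℝ) * ((1/(2*(n:ℝ))) * (q C₀ * (1/2) + q S₁ * (1/2))) := by
      rw [← hW]; exact le_trans hspend2 hg2
    have e : ∀ z : ℝ, (n:ℝ) * ((1/(2*(n:ℝ))) * z) = z / 2 := by
      intro z; field_simp
    rw [e] at h1 h2
    linarith
  -- no arbitrage for group 1 toward PB
  have hν₁le : ∀ C ∈ PB, ν₁ C ≤ lvol C := by
    intro C hC
    by_contra hgt
    push_neg at hgt
    obtain ⟨i, hin, hyi⟩ := holder1 C₀ hC₀PA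
    have hCP := hPBmem C hC
    have hC₀C : C₀ ≠ C := by
      intro h
      obtain ⟨x, hx⟩ := hne C₀ hC₀P
      exact hABdisj x (hPAsub C₀ hC₀PA hx) (hPBsub C hC (h ▸ hx))
    apply hexch i C₀ hC₀P C hCP hC₀C hyi
    rw [Vlin_add_two ρ.parts (νs n i) (y i) hC₀P hCP hC₀C]
    have hν : νs n i = ν₁ := if_pos hin
    rw [hν, nu1_of_subset_A (hPAsub C₀ hC₀PA)]
    have hlC₀ := hlpos C₀ hC₀P
    have hlC := hlpos C hCP
    have hqC := hqpos C hCP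
    have hδ : q C₀ * y i C₀ / q C = y i C₀ := by
      rw [hqeq, ← hqB C hC]
      field_simp
    rw [hδ]
    rw [div_mul_once (-(y i C₀)) (lvol C₀) (ne_of_gt hlC₀)]
    have e2 : y i C₀ / lvol C * ν₁ C = y i C₀ * (ν₁ C / lvol C) := by ring
    rw [e2]
    have hd : 1 < ν₁ C / lvol C := (one_lt_div hlC).mpr hgt
    have hmul := (mul_lt_mul_iff_right₀ hyi).mpr hd
    linarith
  -- final geometric contradiction
  have hab : ∀ C ∈ PB, lvol (C ∩ Set.Ico (1/2) (3/4)) ≤ lvol (C ∩ Set.Icc (3/4) 1) := by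
    intro C hC
    have h1 := nu1_of_subset_B (hPBsub C hC)
    have h2 := lvol_split_B (hPBsub C hC) (hmeas C (hPBmem C hC))
    have h3 := hν₁le C hC
    linarith
  have haeqb : ∀ C ∈ PB, lvol (C ∩ Set.Ico (1/2) (3/4)) = lvol (C ∩ Set.Icc (3/4) 1) := by
    by_contra hcon
    push_neg at hcon
    obtain ⟨C1, hC1, hne1⟩ := hcon
    have hlt := Finset.sum_lt_sum hab ⟨C1, hC1, lt_of_le_of_ne (hab C1 hC1) hne1⟩
    rw [ha_sum, hb_sum] at hlt
    linarith
  have h34 : ∀ C ∈ PB, (3/4:ℝ) ∈ C := by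
    intro C hC
    have hCP := hPBmem C hC
    have heq := haeqb C hC
    have hsp := lvol_split_B (hPBsub C hC) (hmeas C hCP)
    have hlC := hlpos C hCP
    have hapos : 0 < lvol (C ∩ Set.Ico (1/2:ℝ) (3/4)) := by linarith
    have hbpos : 0 < lvol (C ∩ Set.Icc (3/4:ℝ) 1) := by linarith
    have hne1 : (C ∩ Set.Ico (1/2:ℝ) (3/4)).Nonempty := by
      rcases Set.eq_empty_or_nonempty (C ∩ Set.Ico (1/2:ℝ) (3/4)) with h | h
      · rw [h, lvol_empty] at hapos; linarith
      · exact h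
    obtain ⟨p, hpC, hp⟩ := hne1
    have hne2 : (C ∩ Set.Ioc (3/4:ℝ) 1).Nonempty := by
      rcases Set.eq_empty_or_nonempty (C ∩ Set.Ioc (3/4:ℝ) 1) with h | h
      · exfalso
        have hsub : C ∩ Set.Icc (3/4:ℝ) 1 ⊆ {(3/4:ℝ)} := by
          rintro x ⟨hxC, hx1, hx2⟩
          rcases eq_or_lt_of_le hx1 with h' | h'
          · exact h'.symm
          · exact absurd ⟨hxC, h', hx2⟩ (Set.eq_empty_iff_forall_notMem.mp h x)
        have hle : volume (C ∩ Set.Icc (3/4:ℝ) 1) ≤ volume {(3/4:ℝ)} := measure_mono hsub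
        rw [Real.volume_singleton] at hle
        have : lvol (C ∩ Set.Icc (3/4:ℝ) 1) = 0 := by
          unfold lvol
          rw [le_zero_iff.mp hle]
          simp
        linarith
      · exact h
    obtain ⟨r, hrC, hr⟩ := hne2
    exact (ρ.isInterval C hCP).out hpC hrC ⟨le_of_lt hp.2, le_of_lt hr.1⟩
  have hd := ρ.pairwiseDisj (Finset.mem_coe.mpr hS₁m) (Finset.mem_coe.mpr hS₂m) hS₁₂
  exact Set.disjoint_left.mp hd (h34 S₁ hS₁PB) (h34 S₂ hS₂PB)


/-- (a) unit prices and the allocation `xs` form a competitive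
equilibrium of `E(π)`, and the sum of all agents' equilibrium utilities equals `3/2`;
(b) for every classification `ρ` refining `π` and splitting `B` into at least two
intervals, every competitive equilibrium of `E(ρ)` has total utility strictly
below `3/2`. -/
theorem refinement_not_welfare_improving (n : ℕ) (hn : 0 < n) :
    (IsEqm partsπ (κ n) (fun i => Vlin partsπ (νs n i)) (fun _ => 1) (xs n) ∧
      ∑ i, Vlin partsπ (νs n i) (xs n i) = 3/2) ∧
    (∀ ρ : Classification,
      (∀ S ∈ ρ.parts, S ⊆ A ∨ S ⊆ B) →
      (∃ S₁ ∈ ρ.parts, ∃ S₂ ∈ ρ.parts, S₁ ≠ S₂ ∧ S₁ ⊆ B ∧ S₂ ⊆ B) →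
      ∀ (q : Set ℝ → ℝ) (y : Fin (2 * n) → Set ℝ → ℝ),
        IsEqm ρ.parts (κ n) (fun i => Vlin ρ.parts (νs n i)) q y →
        ∑ i, Vlin ρ.parts (νs n i) (y i) < 3/2) := by
  exact ⟨part_a n hn, fun ρ h1 h2 q y heqm => part_b n hn ρ h1 h2 q y heqm⟩

end Stmt13

end
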